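/- Example 6.4. Let Λ > 0 and consider the transition probability on ℝ given by P(y, A) := ∫⁻ t in Set.Ioi (0:ℝ), ENNReal.ofReal (Λ * Real.exp (-(Λ*t))) * Set.indicator A 1 (Real.exp (-t) * y) dt for y ∈ ℝ and Borel A ⊆ ℝ. Then the Dirac measure at 0 is the unique invariant probability measure: Measure.dirac 0 satisfies ∫⁻ y, P(y,A) ∂(Measure.dirac 0) = Measure.dirac 0 A for every Borel A, and every Borel probability measure μ on ℝ satisfying ∫⁻ y, P(y,A) ∂μ = μ A for every Borel A equals Measure.dirac 0; moreover Measure.dirac 0 is mutually singular with Lebesgue measure on ℝ. -/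

import Mathlib

open MeasureTheory ENNReal

noncomputable section

/-- The transition probability of the one-semiflow, one-transformation model on `ℝ` with
`S(t,y) = e^{-t} y` and `w = id`. -/
def Pex (Λ : ℝ) (y : ℝ) (A : Set ℝ) : ℝ≥0∞ :=
  ∫⁻ t in Set.Ioi (0:ℝ),
    ENNReal.ofReal (Λ * Real.exp (-(Λ*t))) *
    Set.indicator A (fun _ => (1:ℝ≥0∞)) (Real.exp (-t) * y)

open Real Set ProbabilityTheory

lemma expInt_Ioi {Λ : ℝ} (hΛ : 0 < Λ) :
    ∫⁻ t in Set.Ioi (0:ℝ), ENNReal.ofReal (Λ * Real.exp (-(Λ*t))) = 1 := by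
  have h1 : ∫⁻ t, exponentialPDF Λ t = 1 := lintegral_exponentialPDF_eq_one hΛ
  have h2 : (∫⁻ t in Set.Iic (0:ℝ), exponentialPDF Λ t)
      + ∫⁻ t in (Set.Iic (0:ℝ))ᶜ, exponentialPDF Λ t = 1 := by
    rw [lintegral_add_compl _ measurableSet_Iic, h1]
  have h3 : ∫⁻ t in Set.Iic (0:ℝ), exponentialPDF Λ t = 0 := by
    rw [lintegral_exponentialPDF_eq_antiDeriv hΛ 0]
    norm_num
  rw [h3, zero_add, Set.compl_Iic] at h2
  rw [← h2]
  refine setLIntegral_congr_fun measurableSet_Ioi (fun t ht => ?_)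
  rw [exponentialPDF_of_nonneg (le_of_lt ht)]

lemma expInt_Ioc {Λ : ℝ} (hΛ : 0 < Λ) (L : ℝ) (hL : 0 ≤ L) :
    ∫⁻ t in Set.Ioc (0:ℝ) L, ENNReal.ofReal (Λ * Real.exp (-(Λ*t)))
      ≤ ENNReal.ofReal (1 - Real.exp (-(Λ*L))) := by
  have h1 : ∫⁻ t in Set.Ioc (0:ℝ) L, ENNReal.ofReal (Λ * Real.exp (-(Λ*t)))
      = ∫⁻ t in Set.Ioc (0:ℝ) L, exponentialPDF Λ t := by
    refine setLIntegral_congr_fun measurableSet_Ioc (fun t ht => ?_)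
    rw [exponentialPDF_of_nonneg (le_of_lt ht.1)]
  have h2 : ∫⁻ t in Set.Ioc (0:ℝ) L, exponentialPDF Λ t
      ≤ ∫⁻ t in Set.Iic L, exponentialPDF Λ t :=
    lintegral_mono_set Set.Ioc_subset_Iic_self
  rw [h1, lintegral_exponentialPDF_eq_antiDeriv hΛ L, if_pos hL] at *
  exact h2

lemma Pex_le_one {Λ : ℝ} (hΛ : 0 < Λ) (y : ℝ) (A : Set ℝ) : Pex Λ y A ≤ 1 := by
  calc Pex Λ y A ≤ ∫⁻ t in Set.Ioi (0:ℝ), ENNReal.ofReal (Λ * Real.exp (-(Λ*t))) := by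
        refine lintegral_mono fun t => ?_
        conv_rhs => rw [← mul_one (ENNReal.ofReal (Λ * Real.exp (-(Λ*t))))]
        exact mul_le_mul_right (Set.indicator_le_self' (fun _ _ => zero_le_one) _) _
    _ = 1 := expInt_Ioi hΛ

/-- If `|y| < c` then the chain never reaches `{|·| ≥ c}`. -/
lemma Pex_eq_zero {Λ : ℝ} (c y : ℝ) (hy : |y| < c) :
    Pex Λ y {z : ℝ | c ≤ |z|} = 0 := by
  unfold Pex
  rw [← lintegral_zero (μ := volume.restrict (Set.Ioi (0:ℝ)))]
  refine setLIntegral_congr_fun measurableSet_Ioi (fun t ht => ?_)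
  have h1 : |Real.exp (-t) * y| < c := by
    rw [abs_mul, abs_of_pos (Real.exp_pos _)]
    have he1 : Real.exp (-t) ≤ 1 := Real.exp_le_one_iff.mpr
      (by simp only [Set.mem_Ioi] at ht; linarith)
    calc Real.exp (-t) * |y| ≤ 1 * |y| := mul_le_mul_of_nonneg_right he1 (abs_nonneg y)
      _ = |y| := one_mul _
      _ < c := hy
  rw [Set.indicator_of_notMem (by simpa using not_le.mpr h1), mul_zero]

lemma Pex_lt_one {Λ : ℝ} (hΛ : 0 < Λ) {c y : ℝ} (hc : 0 < c) (hy : c ≤ |y|) :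
    Pex Λ y {z : ℝ | c ≤ |z|} < 1 := by
  set L : ℝ := Real.log (|y| / c) with hLdef
  have hyc : (1:ℝ) ≤ |y| / c := (one_le_div hc).mpr hy
  have hL : 0 ≤ L := Real.log_nonneg hyc
  have key : Pex Λ y {z : ℝ | c ≤ |z|}
      ≤ ∫⁻ t in Set.Ioc (0:ℝ) L, ENNReal.ofReal (Λ * Real.exp (-(Λ*t))) := by
    unfold Pex
    have hb : ∀ t ∈ Set.Ioi (0:ℝ),
        ENNReal.ofReal (Λ * Real.exp (-(Λ*t))) *
          Set.indicator {z : ℝ | c ≤ |z|} (fun _ => (1:ℝ≥0∞)) (Real.exp (-t) * y)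
        ≤ (Set.Ioc (0:ℝ) L).indicator
            (fun t => ENNReal.ofReal (Λ * Real.exp (-(Λ*t)))) t := by
      intro t ht
      by_cases hmem : Real.exp (-t) * y ∈ {z : ℝ | c ≤ |z|}
      · have hcle : c ≤ Real.exp (-t) * |y| := by
          have := hmem
          simp only [Set.mem_setOf_eq, abs_mul, abs_of_pos (Real.exp_pos _)] at this
          exact this
        have htL : t ≤ L := by
          have h1 : Real.exp t ≤ |y| / c := by
            rw [le_div_iff₀ hc]
            calc Real.exp t * c ≤ Real.exp t * (Real.exp (-t) * |y|) :=
                  mul_le_mul_of_nonneg_left hcle (le_of_lt (Real.exp_pos _))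
              _ = |y| := by rw [← mul_assoc, ← Real.exp_add]; simp
          calc t = Real.log (Real.exp t) := (Real.log_exp t).symm
            _ ≤ L := Real.log_le_log (Real.exp_pos _) h1
        rw [Set.indicator_of_mem hmem, mul_one,
          Set.indicator_of_mem (Set.mem_Ioc.mpr ⟨ht, htL⟩)]
      · rw [Set.indicator_of_notMem hmem, mul_zero]
        exact zero_le'
    calc (∫⁻ t in Set.Ioi (0:ℝ),
          ENNReal.ofReal (Λ * Real.exp (-(Λ*t))) *
          Set.indicator {z : ℝ | c ≤ |z|} (fun _ => (1:ℝ≥0∞)) (Real.exp (-t) * y))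
        ≤ ∫⁻ t in Set.Ioi (0:ℝ), (Set.Ioc (0:ℝ) L).indicator
            (fun t => ENNReal.ofReal (Λ * Real.exp (-(Λ*t)))) t :=
          setLIntegral_mono' measurableSet_Ioi hb
      _ = ∫⁻ t in Set.Ioc (0:ℝ) L ∩ Set.Ioi 0,
            ENNReal.ofReal (Λ * Real.exp (-(Λ*t))) := by
          rw [lintegral_indicator measurableSet_Ioc, Measure.restrict_restrict measurableSet_Ioc]
      _ = ∫⁻ t in Set.Ioc (0:ℝ) L, ENNReal.ofReal (Λ * Real.exp (-(Λ*t))) := by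
          rw [Set.inter_eq_self_of_subset_left Set.Ioc_subset_Ioi_self]
  calc Pex Λ y {z : ℝ | c ≤ |z|}
      ≤ ENNReal.ofReal (1 - Real.exp (-(Λ*L))) := key.trans (expInt_Ioc hΛ L hL)
    _ < 1 := ENNReal.ofReal_lt_one.mpr (by linarith [Real.exp_pos (-(Λ*L))])

lemma meas_setc (c : ℝ) : MeasurableSet {z : ℝ | c ≤ |z|} :=
  (measurableSet_Ici.preimage continuous_abs.measurable)

/-- **Example 6.4.** For the model on `ℝ` with the single semiflow `S(t,y) = e^{-t}y` and the
single (identity) jump transformation, the Dirac measure at `0` is the unique invariant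
probability measure, and it is singular with respect to Lebesgue measure. -/
theorem ex_6_4 (Λ : ℝ) (hΛ : 0 < Λ) :
    (∀ A : Set ℝ, MeasurableSet A →
      (∫⁻ y, Pex Λ y A ∂(Measure.dirac (0:ℝ))) = Measure.dirac (0:ℝ) A) ∧
    (∀ μ : Measure ℝ, IsProbabilityMeasure μ →
      (∀ A : Set ℝ, MeasurableSet A → (∫⁻ y, Pex Λ y A ∂μ) = μ A) →
      μ = Measure.dirac (0:ℝ)) ∧
    (Measure.dirac (0:ℝ)).MutuallySingular (volume : Measure ℝ) := by
  refine ⟨?_, ?_, ?_⟩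
  · intro A hA
    rw [lintegral_dirac, Measure.dirac_apply' _ hA]
    unfold Pex
    have : ∀ t : ℝ, ENNReal.ofReal (Λ * Real.exp (-(Λ*t))) *
        Set.indicator A (fun _ => (1:ℝ≥0∞)) (Real.exp (-t) * 0)
        = ENNReal.ofReal (Λ * Real.exp (-(Λ*t))) *
          Set.indicator A (fun _ => (1:ℝ≥0∞)) 0 := by
      intro t; rw [mul_zero]
    simp only [this]
    rw [lintegral_mul_const _ (by fun_prop), expInt_Ioi hΛ, one_mul]
    by_cases h0 : (0:ℝ) ∈ A <;> simp [h0]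
  · intro μ hμ hinv
    -- Step 1: μ {|y| ≥ c} = 0 for every c > 0
    have step1 : ∀ c : ℝ, 0 < c → μ {z : ℝ | c ≤ |z|} = 0 := by
      intro c hc
      set A := {z : ℝ | c ≤ |z|} with hAdef
      have hA : MeasurableSet A := meas_setc c
      have hle : (fun y => Pex Λ y A) ≤ A.indicator (fun _ => (1:ℝ≥0∞)) := by
        intro y
        by_cases hy : y ∈ A
        · rw [Set.indicator_of_mem hy]; exact Pex_le_one hΛ y A
        · rw [Set.indicator_of_notMem hy]
          have : |y| < c := not_le.mp hy
          exact le_of_eq (Pex_eq_zero c y this)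
      have hint : ∫⁻ y, A.indicator (fun _ => (1:ℝ≥0∞)) y ∂μ = μ A := by
        rw [lintegral_indicator hA]; simp
      have hfin : (∫⁻ y, Pex Λ y A ∂μ) ≠ ∞ := by
        rw [hinv A hA]; exact (measure_lt_top μ A).ne
      have hae : (fun y => Pex Λ y A) =ᵐ[μ] A.indicator (fun _ => (1:ℝ≥0∞)) := by
        refine ae_eq_of_ae_le_of_lintegral_le (ae_of_all _ hle) hfin
          (measurable_const.indicator hA).aemeasurable ?_
        rw [hint, hinv A hA]
      -- on A, Pex < 1 = indicator
      have hsub : A ⊆ {y : ℝ | ¬ (Pex Λ y A = A.indicator (fun _ => (1:ℝ≥0∞)) y)} := by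
        intro y hy
        simp only [Set.mem_setOf_eq]
        rw [Set.indicator_of_mem hy]
        exact ne_of_lt (Pex_lt_one hΛ hc hy)
      refine nonpos_iff_eq_zero.mp ?_
      calc μ A ≤ μ {y : ℝ | ¬ (Pex Λ y A = A.indicator (fun _ => (1:ℝ≥0∞)) y)} :=
            measure_mono hsub
        _ = 0 := hae
    -- Step 2: μ {0}ᶜ = 0
    have step2 : μ ({(0:ℝ)}ᶜ) = 0 := by
      have hcup : ({(0:ℝ)}ᶜ : Set ℝ) ⊆ ⋃ n : ℕ, {z : ℝ | (1:ℝ)/(n+1) ≤ |z|} := by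
        intro y hy
        have hy0 : 0 < |y| := abs_pos.mpr (by simpa using hy)
        obtain ⟨n, hn⟩ := exists_nat_one_div_lt hy0
        exact Set.mem_iUnion.mpr ⟨n, le_of_lt hn⟩
      refine measure_mono_null hcup (measure_iUnion_null fun n => step1 _ ?_)
      positivity
    have h0 : μ {(0:ℝ)} = 1 := by
      have := measure_compl (μ := μ) (measurableSet_singleton (0:ℝ)) (measure_ne_top μ _)
      rw [step2, measure_univ] at this
      have h1 : μ {(0:ℝ)} ≤ 1 := prob_le_one
      -- this : 1 - μ {0} = 0
      have := tsub_eq_zero_iff_le.mp this.symm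
      exact le_antisymm h1 this
    ext s hs
    rw [Measure.dirac_apply' _ hs]
    by_cases h0s : (0:ℝ) ∈ s
    · rw [Set.indicator_of_mem h0s]
      refine le_antisymm prob_le_one ?_
      calc (1:ℝ≥0∞) = μ {(0:ℝ)} := h0.symm
        _ ≤ μ s := measure_mono (Set.singleton_subset_iff.mpr h0s)
    · rw [Set.indicator_of_notMem h0s]
      refine measure_mono_null ?_ step2
      intro y hy
      simp only [Set.mem_compl_iff, Set.mem_singleton_iff]
      rintro rfl
      exact h0s hy
  · refine ⟨{(0:ℝ)}ᶜ, (measurableSet_singleton _).compl, ?_, ?_⟩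
    · rw [Measure.dirac_apply' _ (measurableSet_singleton (0:ℝ)).compl]
      simp
    · rw [compl_compl]
      exact Real.volume_singleton
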